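/- (Scherbak's formula, combinatorial form.) Let q₁,…,q_h be nonnegative integers with q_j ≤ n for all j and q₁+⋯+q_h = 2n. Then N(n) − N(n+1) = Σ_{I⊆{1,…,h}} (−1)^{h+1−|I|} C(Σ_{i∈I}q_i + |I| − n − 1, h − 2), where N(m) is the number of h-tuples (m₁,…,m_h) of nonnegative integers with m_j ≤ q_j and Σm_j = m. -/

import Mathlib

/-- Integer binomial coefficient with the convention `C(a,b) = 0` when `a < 0`
or `b < 0` (and, as usual, when `b > a`). -/
def izChoose (a b : ℤ) : ℤ :=
  if a < 0 ∨ b < 0 then 0 else (a.toNat).choose b.toNat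

open Finset

/-- Stars and bars: cardinality of `antidiagonalTuple`. -/
lemma scherbak_card_adt (k m : ℕ) :
    (Finset.Nat.antidiagonalTuple k m).card = (k + m - 1).choose m := by
  rw [← Finset.piAntidiag_univ_fin_eq_antidiagonalTuple m k,
    ← Finset.map_sym_eq_piAntidiag, Finset.card_map, Finset.sym_univ, Finset.card_univ,
    Sym.card_sym_eq_multichoose, Fintype.card_fin, Nat.multichoose_eq]

/-- Shift bijection: tuples with sum `m` and lower bounds `c` on coordinates in `I`
correspond to tuples with sum `m - ∑_{i∈I} c i`. -/
lemma scherbak_card_shift (k m : ℕ) (c : Fin k → ℕ) (I : Finset (Fin k))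
    (hle : ∑ i ∈ I, c i ≤ m) :
    ((Finset.Nat.antidiagonalTuple k m).filter fun μ => ∀ i ∈ I, c i ≤ μ i).card
      = (Finset.Nat.antidiagonalTuple k (m - ∑ i ∈ I, c i)).card := by
  classical
  have hdsum : ∑ i, (if i ∈ I then c i else 0) = ∑ i ∈ I, c i := by
    rw [Finset.sum_ite_mem, Finset.univ_inter]
  apply Finset.card_bij' (fun μ _ => fun i => μ i - if i ∈ I then c i else 0)
    (fun ν _ => fun i => ν i + if i ∈ I then c i else 0)
  · intro μ hμ
    rw [Finset.mem_filter, Finset.Nat.mem_antidiagonalTuple] at hμ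
    obtain ⟨hs, hb⟩ := hμ
    rw [Finset.Nat.mem_antidiagonalTuple]
    have hble : ∀ i ∈ (Finset.univ : Finset (Fin k)),
        (if i ∈ I then c i else 0) ≤ μ i := by
      intro i _
      rcases Decidable.em (i ∈ I) with hi | hi
      · simpa [hi] using hb i hi
      · simp [hi]
    rw [Finset.sum_tsub_distrib _ hble, hs, hdsum]
  · intro ν hν
    rw [Finset.Nat.mem_antidiagonalTuple] at hν
    rw [Finset.mem_filter, Finset.Nat.mem_antidiagonalTuple]
    constructor
    · rw [Finset.sum_add_distrib, hν, hdsum]; omega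
    · intro i hi; simp [hi]
  · intro μ hμ
    rw [Finset.mem_filter] at hμ
    funext i
    simp only []
    rcases Decidable.em (i ∈ I) with hi | hi
    · have := hμ.2 i hi
      simp only [if_pos hi]
      omega
    · simp [hi]
  · intro ν _
    funext i
    simp only []
    omega

lemma scherbak_filter_empty (k m : ℕ) (c : Fin k → ℕ) (I : Finset (Fin k))
    (hlt : m < ∑ i ∈ I, c i) :
    ((Finset.Nat.antidiagonalTuple k m).filter fun μ => ∀ i ∈ I, c i ≤ μ i).card = 0 := by
  rw [Finset.card_eq_zero, Finset.filter_eq_empty_iff]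
  intro μ hμ hall
  have h1 : ∑ i ∈ I, c i ≤ ∑ i ∈ I, μ i := Finset.sum_le_sum hall
  have h2 : ∑ i ∈ I, μ i ≤ ∑ i, μ i := Finset.sum_le_sum_of_subset (Finset.subset_univ I)
  rw [Finset.Nat.mem_antidiagonalTuple] at hμ
  omega

/-- The count of tuples with sum `m` and lower bounds `c` on `I`, as an integer
binomial coefficient. -/
lemma scherbak_stepB (k m : ℕ) (hk : 1 ≤ k) (c : Fin k → ℕ) (I : Finset (Fin k)) :
    (((Finset.Nat.antidiagonalTuple k m).filter fun μ => ∀ i ∈ I, c i ≤ μ i).card : ℤ)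
      = izChoose ((m : ℤ) - (∑ i ∈ I, c i : ℕ) + k - 1) ((k : ℤ) - 1) := by
  set t := ∑ i ∈ I, c i with ht
  rcases le_or_gt t m with hle | hlt
  · rw [scherbak_card_shift k m c I hle, scherbak_card_adt, izChoose,
      if_neg (by push_neg; omega)]
    have h1 : ((m : ℤ) - t + k - 1).toNat = k + (m - t) - 1 := by omega
    have h2 : ((k : ℤ) - 1).toNat = k - 1 := by omega
    rw [h1, h2]
    norm_cast
    have h3 : (k + (m - t) - 1) - (m - t) = k - 1 := by omega
    rw [← h3]
    exact (Nat.choose_symm (by omega)).symm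
  · rw [scherbak_filter_empty k m c I hlt, izChoose]
    by_cases hneg : (m : ℤ) - t + k - 1 < 0
    · rw [if_pos (Or.inl hneg)]; rfl
    · rw [if_neg (by push_neg; omega)]
      have hBA : ((m : ℤ) - t + k - 1).toNat < ((k : ℤ) - 1).toNat := by omega
      rw [Nat.choose_eq_zero_of_lt hBA]

/-- Inclusion–exclusion for the constrained count. -/
lemma scherbak_stepC (k m : ℕ) (c : Fin k → ℕ) :
    (((Finset.Nat.antidiagonalTuple k m).filter fun μ => ∀ j, μ j ≤ c j).card : ℤ)
      = ∑ I ∈ (Finset.univ : Finset (Fin k)).powerset, (-1 : ℤ) ^ I.card *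
          (((Finset.Nat.antidiagonalTuple k m).filter
            fun μ => ∀ i ∈ I, c i + 1 ≤ μ i).card : ℤ) := by
  classical
  have key : ∀ μ : Fin k → ℕ,
      (if ∀ j, μ j ≤ c j then (1 : ℤ) else 0)
        = ∑ I ∈ (Finset.univ : Finset (Fin k)).powerset,
            (-1 : ℤ) ^ I.card * (if ∀ i ∈ I, c i + 1 ≤ μ i then 1 else 0) := by
    intro μ
    set B : Finset (Fin k) := Finset.univ.filter (fun i => c i + 1 ≤ μ i) with hB
    have hcond : ∀ I : Finset (Fin k), (∀ i ∈ I, c i + 1 ≤ μ i) ↔ I ⊆ B := by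
      intro I
      constructor
      · intro hI i hi
        rw [hB, Finset.mem_filter]
        exact ⟨Finset.mem_univ i, hI i hi⟩
      · intro hI i hi
        have := hI hi
        rw [hB, Finset.mem_filter] at this
        exact this.2
    calc (if ∀ j, μ j ≤ c j then (1 : ℤ) else 0)
        = (if B = ∅ then 1 else 0) := by
          congr 1
          simp only [hB, Finset.filter_eq_empty_iff, eq_iff_iff]
          constructor
          · intro hall i _
            have := hall i
            omega
          · intro hall j
            have := hall (Finset.mem_univ j)
            omega
      _ = ∑ I ∈ B.powerset, (-1 : ℤ) ^ I.card :=
          (Finset.sum_powerset_neg_one_pow_card).symm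
      _ = ∑ I ∈ (Finset.univ : Finset (Fin k)).powerset.filter (· ⊆ B),
            (-1 : ℤ) ^ I.card := by
          congr 1
          ext J
          simp [Finset.mem_powerset, Finset.subset_univ]
      _ = ∑ I ∈ (Finset.univ : Finset (Fin k)).powerset,
            (if I ⊆ B then (-1 : ℤ) ^ I.card else 0) := (Finset.sum_filter _ _)
      _ = _ := by
          refine Finset.sum_congr rfl fun I _ => ?_
          rw [mul_ite, mul_one, mul_zero]
          congr 1
          simp [← hcond I, Nat.succ_le_iff]
  calc (((Finset.Nat.antidiagonalTuple k m).filter fun μ => ∀ j, μ j ≤ c j).card : ℤ)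
      = ∑ μ ∈ Finset.Nat.antidiagonalTuple k m,
          (if ∀ j, μ j ≤ c j then (1 : ℤ) else 0) := by
        rw [Finset.sum_boole]
    _ = ∑ μ ∈ Finset.Nat.antidiagonalTuple k m,
          ∑ I ∈ (Finset.univ : Finset (Fin k)).powerset,
            (-1 : ℤ) ^ I.card * (if ∀ i ∈ I, c i + 1 ≤ μ i then 1 else 0) :=
        Finset.sum_congr rfl fun μ _ => key μ
    _ = ∑ I ∈ (Finset.univ : Finset (Fin k)).powerset,
          ∑ μ ∈ Finset.Nat.antidiagonalTuple k m,
            (-1 : ℤ) ^ I.card * (if ∀ i ∈ I, c i + 1 ≤ μ i then 1 else 0) :=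
        Finset.sum_comm
    _ = _ := by
        refine Finset.sum_congr rfl fun I _ => ?_
        rw [← Finset.mul_sum, Finset.sum_boole]

/-- Pascal's rule for `izChoose`. -/
lemma izChoose_pascal (a b : ℤ) (hb : 1 ≤ b) :
    izChoose (a + 1) b = izChoose a b + izChoose a (b - 1) := by
  unfold izChoose
  rcases lt_trichotomy a (-1) with ha | ha | ha
  · rw [if_pos (Or.inl (by omega)), if_pos (Or.inl (by omega)), if_pos (Or.inl (by omega))]
    ring
  · subst_vars
    rw [if_neg (by push_neg; omega), if_pos (Or.inl (by omega)), if_pos (Or.inl (by omega))]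
    have h0 : ((-1 : ℤ) + 1).toNat = 0 := by omega
    rw [h0, Nat.choose_eq_zero_of_lt (by omega)]
    simp
  · have ha0 : 0 ≤ a := by omega
    rw [if_neg (by push_neg; omega), if_neg (by push_neg; omega), if_neg (by push_neg; omega)]
    have h1 : (a + 1).toNat = a.toNat + 1 := by omega
    have h2 : b.toNat = (b.toNat - 1) + 1 := by omega
    have h3 : (b - 1).toNat = b.toNat - 1 := by omega
    rw [h1, h3]
    norm_cast
    conv_lhs => rw [h2]
    rw [Nat.choose_succ_succ, Nat.succ_eq_add_one, ← h2]
    omega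

/-- Scherbak's formula (Theorem 5.5, combinatorial form): with
`N(m) = #{(m₁,…,m_h) ∈ ℕ^h : m_j ≤ q_j, Σ m_j = m}`, `q_j ≤ n`, `Σ q_j = 2n`,
`N(n) − N(n+1) = Σ_{I⊆{1,…,h}} (−1)^{h+1−|I|} C(Σ_{i∈I} q_i + |I| − n − 1, h − 2)`. -/
theorem scherbak_formula (n h : ℕ) (hh : 2 ≤ h) (q : Fin h → ℕ)
    (hq : ∀ j, q j ≤ n) (hsum : ∑ j, q j = 2 * n) :
    (((Finset.Nat.antidiagonalTuple h n).filter fun μ => ∀ j, μ j ≤ q j).card : ℤ) -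
      (((Finset.Nat.antidiagonalTuple h (n + 1)).filter fun μ => ∀ j, μ j ≤ q j).card : ℤ) =
      ∑ I ∈ (Finset.univ : Finset (Fin h)).powerset,
        (-1 : ℤ) ^ (h + 1 - I.card) *
          izChoose ((∑ i ∈ I, (q i : ℤ)) + I.card - n - 1) ((h : ℤ) - 2) := by
  classical
  have hN : ∀ m : ℕ,
      (((Finset.Nat.antidiagonalTuple h m).filter fun μ => ∀ j, μ j ≤ q j).card : ℤ)
        = ∑ I ∈ (Finset.univ : Finset (Fin h)).powerset, (-1 : ℤ) ^ I.card *
            izChoose ((m : ℤ) - ((∑ i ∈ I, (q i : ℤ)) + I.card) + h - 1) ((h : ℤ) - 1) := by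
    intro m
    rw [scherbak_stepC h m q]
    refine Finset.sum_congr rfl fun I _ => ?_
    rw [scherbak_stepB h m (by omega) (fun i => q i + 1) I]
    congr 2
    have : ∑ i ∈ I, (q i + 1) = (∑ i ∈ I, q i) + I.card := by
      rw [Finset.sum_add_distrib, Finset.sum_const, smul_eq_mul, mul_one]
    rw [this]
    push_cast
    ring
  rw [hN n, hN (n + 1), ← Finset.sum_sub_distrib]
  have lhs_eq : ∀ I ∈ (Finset.univ : Finset (Fin h)).powerset,
      ((-1 : ℤ) ^ I.card *
          izChoose ((n : ℤ) - ((∑ i ∈ I, (q i : ℤ)) + I.card) + h - 1) ((h : ℤ) - 1)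
        - (-1 : ℤ) ^ I.card *
          izChoose (((n : ℕ) + 1 : ℕ) - ((∑ i ∈ I, (q i : ℤ)) + I.card) + h - 1) ((h : ℤ) - 1))
        = (-1 : ℤ) ^ (I.card + 1) *
          izChoose ((n : ℤ) - ((∑ i ∈ I, (q i : ℤ)) + I.card) + h - 1) ((h : ℤ) - 2) := by
    intro I _
    set A : ℤ := (n : ℤ) - ((∑ i ∈ I, (q i : ℤ)) + I.card) + h - 1 with hA
    have harg : (((n : ℕ) + 1 : ℕ) : ℤ) - ((∑ i ∈ I, (q i : ℤ)) + I.card) + h - 1 = A + 1 := by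
      rw [hA]; push_cast; ring
    rw [harg, izChoose_pascal A ((h : ℤ) - 1) (by
      have : (2 : ℤ) ≤ h := by exact_mod_cast hh
      omega)]
    have hb : ((h : ℤ) - 1) - 1 = (h : ℤ) - 2 := by ring
    rw [hb, pow_succ]
    ring
  rw [Finset.sum_congr rfl lhs_eq]
  refine Finset.sum_nbij' (fun I => Iᶜ) (fun I => Iᶜ) ?_ ?_ ?_ ?_ ?_
  · intro I _; exact Finset.mem_powerset.mpr (Finset.subset_univ _)
  · intro I _; exact Finset.mem_powerset.mpr (Finset.subset_univ _)
  · intro I _; exact compl_compl I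
  · intro I _; exact compl_compl I
  · intro I _
    have hIc : I.card ≤ h := by
      simpa using Finset.card_le_univ I
    have hcompl_card : Iᶜ.card = h - I.card := by
      rw [Finset.card_compl, Fintype.card_fin]
    have hexp : h + 1 - Iᶜ.card = I.card + 1 := by omega
    have hsumZ : (∑ i ∈ Iᶜ, (q i : ℤ)) = 2 * n - ∑ i ∈ I, (q i : ℤ) := by
      have := Finset.sum_add_sum_compl I (fun i => (q i : ℤ))
      have htot : (∑ j, (q j : ℤ)) = 2 * n := by exact_mod_cast congrArg (Nat.cast : ℕ → ℤ) hsum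
      rw [htot] at this
      linarith
    rw [hexp, hsumZ]
    congr 2
    have hcc : ((Iᶜ.card : ℕ) : ℤ) = (h : ℤ) - I.card := by
      rw [hcompl_card]; omega
    rw [hcc]
    ring
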